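/- Let 0 < a < b, r ∈ [0,1], ε ≥ 0, and let Ω = {x ∈ ℝ² : a < ‖x‖ < b}. Let u : ℝ² → ℝ be twice continuously differentiable with ‖∇u(x)‖ ≤ r for all x in the closure of Ω and ∫_Ω ‖D²u(x)‖² dx ≤ 2(1+r)ε, where ‖D²u(x)‖² = ∑_{i,j=1}^{2} (∂_{ij}u(x))² and the integral is with respect to 2-dimensional Lebesgue measure. Then there exists ρ ∈ (a,b) such that, setting f : [0,1] → ℝ³, f(t) = (ρ·cos(2πt), ρ·sin(2πt), u(ρ·cos(2πt), ρ·sin(2πt))), one has ∫₀¹ ‖f″(t)‖/‖f′(t)‖ dt ≤ 2π·(1 + √2·r + √(2εb/(b−a))). -/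

import Mathlib

set_option maxHeartbeats 1000000

open MeasureTheory Real

/-- The second partial derivative `∂_{ij} u` of `u : ℝ² → ℝ`. -/
noncomputable def secondPartial (u : EuclideanSpace ℝ (Fin 2) → ℝ) (i j : Fin 2)
    (x : EuclideanSpace ℝ (Fin 2)) : ℝ :=
  fderiv ℝ (fun y => fderiv ℝ u y (EuclideanSpace.single j 1)) x (EuclideanSpace.single i 1)

noncomputable section S7
def Qd (u : EuclideanSpace ℝ (Fin 2) → ℝ) (x : EuclideanSpace ℝ (Fin 2)) : ℝ :=
  ∑ i, ∑ j, (secondPartial u i j x)^2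

lemma Qd_nonneg (u x) : 0 ≤ Qd u x := by
  apply Finset.sum_nonneg; intro i _; apply Finset.sum_nonneg; intro j _; positivity

lemma decomp (v : EuclideanSpace ℝ (Fin 2)) :
    v = v 0 • EuclideanSpace.single 0 1 + v 1 • EuclideanSpace.single 1 1 := by
  ext i
  fin_cases i <;> simp [EuclideanSpace.single_apply]

lemma secondPartial_eq (u : EuclideanSpace ℝ (Fin 2) → ℝ) (hu : ContDiff ℝ 2 u) (i j : Fin 2)
    (x : EuclideanSpace ℝ (Fin 2)) :
    secondPartial u i j x
      = fderiv ℝ (fderiv ℝ u) x (EuclideanSpace.single i 1) (EuclideanSpace.single j 1) := by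
  have hdiff : DifferentiableAt ℝ (fderiv ℝ u) x :=
    ((hu.fderiv_right (m := 1) (by norm_num)).differentiable (by norm_num)).differentiableAt
  rw [secondPartial, fderiv_clm_apply hdiff (differentiableAt_const _)]
  simp

lemma bilinear_est (u : EuclideanSpace ℝ (Fin 2) → ℝ) (hu : ContDiff ℝ 2 u)
    (x v w : EuclideanSpace ℝ (Fin 2)) :
    |fderiv ℝ (fderiv ℝ u) x v w| ≤ ‖v‖ * ‖w‖ * Real.sqrt (Qd u x) := by
  set B := fderiv ℝ (fderiv ℝ u) x with hB
  have hexp : B v w = v 0 * (w 0 * secondPartial u 0 0 x + w 1 * secondPartial u 0 1 x)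
      + v 1 * (w 0 * secondPartial u 1 0 x + w 1 * secondPartial u 1 1 x) := by
    rw [secondPartial_eq u hu 0 0 x, secondPartial_eq u hu 0 1 x,
      secondPartial_eq u hu 1 0 x, secondPartial_eq u hu 1 1 x]
    conv_lhs => rw [decomp v, decomp w]
    simp [_root_.map_smul, smul_eq_mul, hB]
  have hQ : Qd u x = (secondPartial u 0 0 x)^2 + (secondPartial u 0 1 x)^2
      + ((secondPartial u 1 0 x)^2 + (secondPartial u 1 1 x)^2) := by
    simp [Qd, Fin.sum_univ_two]
  have hv : ‖v‖ = Real.sqrt ((v 0)^2 + (v 1)^2) := by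
    rw [EuclideanSpace.norm_eq]; simp [Fin.sum_univ_two]
  have hw : ‖w‖ = Real.sqrt ((w 0)^2 + (w 1)^2) := by
    rw [EuclideanSpace.norm_eq]; simp [Fin.sum_univ_two]
  rw [hexp, hQ, hv, hw, ← Real.sqrt_mul (by positivity), ← Real.sqrt_mul (by positivity),
    ← Real.sqrt_sq_eq_abs]
  apply Real.sqrt_le_sqrt
  set a := secondPartial u 0 0 x; set b := secondPartial u 0 1 x
  set c := secondPartial u 1 0 x; set d := secondPartial u 1 1 x
  nlinarith [sq_nonneg (v 0 * w 0 * b - v 0 * w 1 * a), sq_nonneg (v 0 * w 0 * c - v 1 * w 0 * a),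
    sq_nonneg (v 0 * w 0 * d - v 1 * w 1 * a), sq_nonneg (v 0 * w 1 * c - v 1 * w 0 * b),
    sq_nonneg (v 0 * w 1 * d - v 1 * w 1 * b), sq_nonneg (v 1 * w 0 * d - v 1 * w 1 * c)]

def pt2 (x y : ℝ) : EuclideanSpace ℝ (Fin 2) := (WithLp.equiv 2 (Fin 2 → ℝ)).symm ![x, y]
def pt3 (x y z : ℝ) : EuclideanSpace ℝ (Fin 3) := (WithLp.equiv 2 (Fin 3 → ℝ)).symm ![x, y, z]

lemma pt2_norm (x y : ℝ) : ‖pt2 x y‖ = Real.sqrt (x^2 + y^2) := by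
  rw [pt2, EuclideanSpace.norm_eq]
  simp [Fin.sum_univ_two]

lemma pt3_norm (x y z : ℝ) : ‖pt3 x y z‖ = Real.sqrt (x^2 + y^2 + z^2) := by
  rw [pt3, EuclideanSpace.norm_eq]
  simp [Fin.sum_univ_three]

lemma hasDerivAt_pt2 {x y : ℝ → ℝ} {x' y' : ℝ} {t : ℝ} (hx : HasDerivAt x x' t)
    (hy : HasDerivAt y y' t) : HasDerivAt (fun s => pt2 (x s) (y s)) (pt2 x' y') t := by
  have h : HasDerivAt (fun s => ![x s, y s] : ℝ → (Fin 2 → ℝ)) ![x', y'] t := by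
    rw [hasDerivAt_pi]
    intro i
    fin_cases i
    · simpa using hx
    · simpa using hy
  have := ((PiLp.continuousLinearEquiv 2 ℝ (fun _ : Fin 2 => ℝ)).symm.hasFDerivAt.comp_hasDerivAt t h)
  exact this

lemma hasDerivAt_pt3 {x y z : ℝ → ℝ} {x' y' z' : ℝ} {t : ℝ} (hx : HasDerivAt x x' t)
    (hy : HasDerivAt y y' t) (hz : HasDerivAt z z' t) :
    HasDerivAt (fun s => pt3 (x s) (y s) (z s)) (pt3 x' y' z') t := by
  have h : HasDerivAt (fun s => ![x s, y s, z s] : ℝ → (Fin 3 → ℝ)) ![x', y', z'] t := by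
    rw [hasDerivAt_pi]
    intro i
    fin_cases i
    · simpa using hx
    · simpa using hy
    · simpa using hz
  have := ((PiLp.continuousLinearEquiv 2 ℝ (fun _ : Fin 3 => ℝ)).symm.hasFDerivAt.comp_hasDerivAt t h)
  exact this



noncomputable section S7b
variable (ρ : ℝ) (u : EuclideanSpace ℝ (Fin 2) → ℝ)

def γ0 (t : ℝ) : EuclideanSpace ℝ (Fin 2) := pt2 (ρ * Real.cos (2*π*t)) (ρ * Real.sin (2*π*t))
def γ1 (t : ℝ) : EuclideanSpace ℝ (Fin 2) :=
  pt2 (-(2*π*ρ * Real.sin (2*π*t))) (2*π*ρ * Real.cos (2*π*t))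
def γ2 (t : ℝ) : EuclideanSpace ℝ (Fin 2) :=
  pt2 (-((2*π)^2*ρ * Real.cos (2*π*t))) (-((2*π)^2*ρ * Real.sin (2*π*t)))

lemma hasDerivAt_cx (t : ℝ) :
    HasDerivAt (fun s => ρ * Real.cos (2*π*s)) (-(2*π*ρ * Real.sin (2*π*t))) t := by
  have h1 : HasDerivAt (fun s : ℝ => 2*π*s) (2*π) t := by
    simpa using (hasDerivAt_id t).const_mul (2*π)
  have := ((Real.hasDerivAt_cos (2*π*t)).comp t h1).const_mul ρ
  exact this.congr_deriv (by ring)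

lemma hasDerivAt_cy (t : ℝ) :
    HasDerivAt (fun s => ρ * Real.sin (2*π*s)) (2*π*ρ * Real.cos (2*π*t)) t := by
  have h1 : HasDerivAt (fun s : ℝ => 2*π*s) (2*π) t := by
    simpa using (hasDerivAt_id t).const_mul (2*π)
  have := ((Real.hasDerivAt_sin (2*π*t)).comp t h1).const_mul ρ
  exact this.congr_deriv (by ring)

lemma hasDerivAt_cx' (t : ℝ) :
    HasDerivAt (fun s => -(2*π*ρ * Real.sin (2*π*s))) (-((2*π)^2*ρ * Real.cos (2*π*t))) t := by
  have h1 : HasDerivAt (fun s : ℝ => 2*π*s) (2*π) t := by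
    simpa using (hasDerivAt_id t).const_mul (2*π)
  have := (((Real.hasDerivAt_sin (2*π*t)).comp t h1).const_mul (2*π*ρ)).neg
  exact this.congr_deriv (by ring)

lemma hasDerivAt_cy' (t : ℝ) :
    HasDerivAt (fun s => 2*π*ρ * Real.cos (2*π*s)) (-((2*π)^2*ρ * Real.sin (2*π*t))) t := by
  have h1 : HasDerivAt (fun s : ℝ => 2*π*s) (2*π) t := by
    simpa using (hasDerivAt_id t).const_mul (2*π)
  have := ((Real.hasDerivAt_cos (2*π*t)).comp t h1).const_mul (2*π*ρ)
  exact this.congr_deriv (by ring)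

lemma hasDerivAt_γ0 (t : ℝ) : HasDerivAt (γ0 ρ) (γ1 ρ t) t :=
  hasDerivAt_pt2 (hasDerivAt_cx ρ t) (hasDerivAt_cy ρ t)

lemma hasDerivAt_γ1 (t : ℝ) : HasDerivAt (γ1 ρ) (γ2 ρ t) t :=
  hasDerivAt_pt2 (hasDerivAt_cx' ρ t) (hasDerivAt_cy' ρ t)

lemma norm_γ1 (hρ : 0 ≤ ρ) (t : ℝ) : ‖γ1 ρ t‖ = 2*π*ρ := by
  rw [γ1, pt2_norm]
  rw [show (-(2*π*ρ * Real.sin (2*π*t)))^2 + (2*π*ρ * Real.cos (2*π*t))^2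
      = (2*π*ρ)^2 * ((Real.sin (2*π*t))^2 + (Real.cos (2*π*t))^2) by ring,
    Real.sin_sq_add_cos_sq, mul_one]
  exact Real.sqrt_sq (by positivity)

lemma norm_γ2 (hρ : 0 ≤ ρ) (t : ℝ) : ‖γ2 ρ t‖ = (2*π)^2*ρ := by
  rw [γ2, pt2_norm]
  rw [show (-((2*π)^2*ρ * Real.cos (2*π*t)))^2 + (-((2*π)^2*ρ * Real.sin (2*π*t)))^2
      = ((2*π)^2*ρ)^2 * ((Real.sin (2*π*t))^2 + (Real.cos (2*π*t))^2) by ring,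
    Real.sin_sq_add_cos_sq, mul_one]
  exact Real.sqrt_sq (by positivity)



end S7b

noncomputable section S7c
variable (ρ : ℝ) (u : EuclideanSpace ℝ (Fin 2) → ℝ)

def z1 (t : ℝ) : ℝ := fderiv ℝ u (γ0 ρ t) (γ1 ρ t)
def z2 (t : ℝ) : ℝ :=
  fderiv ℝ (fderiv ℝ u) (γ0 ρ t) (γ1 ρ t) (γ1 ρ t) + fderiv ℝ u (γ0 ρ t) (γ2 ρ t)

variable {u}

lemma hasDerivAt_zf (hu : ContDiff ℝ 2 u) (t : ℝ) :
    HasDerivAt (fun s => u (γ0 ρ s)) (z1 ρ u t) t :=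
  (((hu.differentiable (by norm_num)) (γ0 ρ t)).hasFDerivAt).comp_hasDerivAt t (hasDerivAt_γ0 ρ t)

lemma hasDerivAt_z1 (hu : ContDiff ℝ 2 u) (t : ℝ) :
    HasDerivAt (z1 ρ u) (z2 ρ u t) t := by
  have hc : HasDerivAt (fun s => fderiv ℝ u (γ0 ρ s))
      (fderiv ℝ (fderiv ℝ u) (γ0 ρ t) (γ1 ρ t)) t :=
    ((((hu.fderiv_right (m := 1) (by norm_num)).differentiable (by norm_num)) (γ0 ρ t)).hasFDerivAt).comp_hasDerivAt
      t (hasDerivAt_γ0 ρ t)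
  exact hc.clm_apply (hasDerivAt_γ1 ρ t)

lemma hasDerivAt_curve (hu : ContDiff ℝ 2 u) (t : ℝ) :
    HasDerivAt (fun s => pt3 (ρ * Real.cos (2*π*s)) (ρ * Real.sin (2*π*s)) (u (γ0 ρ s)))
      (pt3 (-(2*π*ρ * Real.sin (2*π*t))) (2*π*ρ * Real.cos (2*π*t)) (z1 ρ u t)) t :=
  hasDerivAt_pt3 (hasDerivAt_cx ρ t) (hasDerivAt_cy ρ t) (hasDerivAt_zf ρ hu t)

lemma hasDerivAt_curve' (hu : ContDiff ℝ 2 u) (t : ℝ) :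
    HasDerivAt (fun s => pt3 (-(2*π*ρ * Real.sin (2*π*s))) (2*π*ρ * Real.cos (2*π*s)) (z1 ρ u s))
      (pt3 (-((2*π)^2*ρ * Real.cos (2*π*t))) (-((2*π)^2*ρ * Real.sin (2*π*t))) (z2 ρ u t)) t :=
  hasDerivAt_pt3 (hasDerivAt_cx' ρ t) (hasDerivAt_cy' ρ t) (hasDerivAt_z1 ρ hu t)

lemma norm_gradient_eq (x : EuclideanSpace ℝ (Fin 2)) : ‖gradient u x‖ = ‖fderiv ℝ u x‖ := by
  rw [gradient]
  exact LinearIsometryEquiv.norm_map _ _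

lemma ratio_bound (hu : ContDiff ℝ 2 u) (hρ : 0 < ρ) {r : ℝ} (hr0 : 0 ≤ r) (t : ℝ)
    (hgr : ‖fderiv ℝ u (γ0 ρ t)‖ ≤ r) :
    ‖pt3 (-((2*π)^2*ρ * Real.cos (2*π*t))) (-((2*π)^2*ρ * Real.sin (2*π*t))) (z2 ρ u t)‖
      / ‖pt3 (-(2*π*ρ * Real.sin (2*π*t))) (2*π*ρ * Real.cos (2*π*t)) (z1 ρ u t)‖
    ≤ 2*π*(1+r) + 2*π*ρ * Real.sqrt (Qd u (γ0 ρ t)) := by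
  have hπ : (0:ℝ) < π := Real.pi_pos
  have htrig : Real.sin (2*π*t)^2 + Real.cos (2*π*t)^2 = 1 := Real.sin_sq_add_cos_sq _
  have hden : 2*π*ρ ≤ ‖pt3 (-(2*π*ρ * Real.sin (2*π*t))) (2*π*ρ * Real.cos (2*π*t)) (z1 ρ u t)‖ := by
    rw [pt3_norm]
    have : (2*π*ρ)^2 ≤ (-(2*π*ρ * Real.sin (2*π*t)))^2 + (2*π*ρ * Real.cos (2*π*t))^2
        + (z1 ρ u t)^2 := by nlinarith [sq_nonneg (z1 ρ u t)]
    calc 2*π*ρ = Real.sqrt ((2*π*ρ)^2) := (Real.sqrt_sq (by positivity)).symm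
    _ ≤ _ := Real.sqrt_le_sqrt this
  have hz2 : |z2 ρ u t| ≤ (2*π*ρ)^2 * Real.sqrt (Qd u (γ0 ρ t)) + r * ((2*π)^2*ρ) := by
    rw [z2]
    calc |fderiv ℝ (fderiv ℝ u) (γ0 ρ t) (γ1 ρ t) (γ1 ρ t) + fderiv ℝ u (γ0 ρ t) (γ2 ρ t)|
        ≤ |fderiv ℝ (fderiv ℝ u) (γ0 ρ t) (γ1 ρ t) (γ1 ρ t)| + |fderiv ℝ u (γ0 ρ t) (γ2 ρ t)| :=
          abs_add_le _ _
      _ ≤ (2*π*ρ)^2 * Real.sqrt (Qd u (γ0 ρ t)) + r * ((2*π)^2*ρ) := by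
          gcongr ?_ + ?_
          · have := bilinear_est u hu (γ0 ρ t) (γ1 ρ t) (γ1 ρ t)
            rw [norm_γ1 ρ hρ.le t] at this
            calc |_| ≤ (2*π*ρ) * (2*π*ρ) * Real.sqrt (Qd u (γ0 ρ t)) := this
            _ = (2*π*ρ)^2 * Real.sqrt (Qd u (γ0 ρ t)) := by ring
          · calc |fderiv ℝ u (γ0 ρ t) (γ2 ρ t)| ≤ ‖fderiv ℝ u (γ0 ρ t)‖ * ‖γ2 ρ t‖ :=
              (fderiv ℝ u (γ0 ρ t)).le_opNorm _
            _ ≤ r * ((2*π)^2*ρ) := by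
                rw [norm_γ2 ρ hρ.le t]; gcongr
  have hnum : ‖pt3 (-((2*π)^2*ρ * Real.cos (2*π*t))) (-((2*π)^2*ρ * Real.sin (2*π*t))) (z2 ρ u t)‖
      ≤ (2*π)^2*ρ*(1+r) + (2*π*ρ)^2 * Real.sqrt (Qd u (γ0 ρ t)) := by
    rw [pt3_norm]
    have h1 : (-((2*π)^2*ρ * Real.cos (2*π*t)))^2 + (-((2*π)^2*ρ * Real.sin (2*π*t)))^2
        + (z2 ρ u t)^2 ≤ ((2*π)^2*ρ + |z2 ρ u t|)^2 := by
      have : (-((2*π)^2*ρ * Real.cos (2*π*t)))^2 + (-((2*π)^2*ρ * Real.sin (2*π*t)))^2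
          = ((2*π)^2*ρ)^2 := by nlinarith
      rw [this]
      nlinarith [abs_nonneg (z2 ρ u t), sq_abs (z2 ρ u t)]
    calc Real.sqrt _ ≤ Real.sqrt (((2*π)^2*ρ + |z2 ρ u t|)^2) := Real.sqrt_le_sqrt h1
    _ = (2*π)^2*ρ + |z2 ρ u t| := Real.sqrt_sq (by positivity)
    _ ≤ (2*π)^2*ρ + ((2*π*ρ)^2 * Real.sqrt (Qd u (γ0 ρ t)) + r * ((2*π)^2*ρ)) := by gcongr
    _ = (2*π)^2*ρ*(1+r) + (2*π*ρ)^2 * Real.sqrt (Qd u (γ0 ρ t)) := by ring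
  have h2πρ : (0:ℝ) < 2*π*ρ := by positivity
  calc _ ≤ ((2*π)^2*ρ*(1+r) + (2*π*ρ)^2 * Real.sqrt (Qd u (γ0 ρ t))) / (2*π*ρ) := by
        apply div_le_div₀ (by positivity) hnum h2πρ hden
  _ = 2*π*(1+r) + 2*π*ρ * Real.sqrt (Qd u (γ0 ρ t)) := by field_simp
end S7c

noncomputable section S7d
variable (u : EuclideanSpace ℝ (Fin 2) → ℝ)

lemma continuous_Qd (hu : ContDiff ℝ 2 u) : Continuous (Qd u) := by
  apply continuous_finset_sum; intro i _
  apply continuous_finset_sum; intro j _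
  have hc : Continuous fun x => fderiv ℝ (fderiv ℝ u) x (EuclideanSpace.single i 1)
      (EuclideanSpace.single j 1) :=
    (((hu.fderiv_right (m := 1) (by norm_num)).continuous_fderiv (by norm_num)).clm_apply
      continuous_const).clm_apply continuous_const
  have heq : (fun x => (secondPartial u i j x)^2)
      = fun x => (fderiv ℝ (fderiv ℝ u) x (EuclideanSpace.single i 1)
        (EuclideanSpace.single j 1))^2 :=
    funext fun x => by rw [secondPartial_eq u hu]
  exact heq ▸ hc.pow 2

lemma continuous_pt2 : Continuous (fun p : ℝ × ℝ => pt2 p.1 p.2) := by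
  apply (PiLp.continuousLinearEquiv 2 ℝ (fun _ : Fin 2 => ℝ)).symm.continuous.comp
  apply continuous_pi
  intro i
  fin_cases i
  · exact continuous_fst
  · exact continuous_snd

lemma measurePreserving_pt2 :
    MeasurePreserving (fun p : ℝ × ℝ => pt2 p.1 p.2) volume volume := by
  have h1 := (EuclideanSpace.volume_preserving_symm_measurableEquiv_toLp (Fin 2)).symm
  have h2 := (volume_preserving_finTwoArrow ℝ).symm
  have := h1.comp h2
  exact this

lemma measurableEmbedding_pt2 :
    MeasurableEmbedding (fun p : ℝ × ℝ => pt2 p.1 p.2) := by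
  have : (fun p : ℝ × ℝ => pt2 p.1 p.2)
      = ⇑((MeasurableEquiv.finTwoArrow.symm).trans (MeasurableEquiv.toLp 2 (Fin 2 → ℝ)).symm.symm) := by
    funext p
    show pt2 p.1 p.2 = (MeasurableEquiv.toLp 2 (Fin 2 → ℝ)).symm.symm (MeasurableEquiv.finTwoArrow.symm p)
    rfl
  rw [this]
  exact MeasurableEquiv.measurableEmbedding _

lemma norm_pt2_circle (ρ θ : ℝ) : ‖pt2 (ρ * Real.cos θ) (ρ * Real.sin θ)‖ = |ρ| := by
  rw [pt2_norm, show (ρ * Real.cos θ)^2 + (ρ * Real.sin θ)^2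
    = ρ^2 * (Real.sin θ^2 + Real.cos θ^2) by ring, Real.sin_sq_add_cos_sq, mul_one,
    Real.sqrt_sq_eq_abs]

end S7d

noncomputable section S7e
open Set

lemma polar_change (u : EuclideanSpace ℝ (Fin 2) → ℝ) (hu : ContDiff ℝ 2 u)
    {a b : ℝ} (ha : 0 < a) (hab : a < b) :
    ∫ x in {x : EuclideanSpace ℝ (Fin 2) | a < ‖x‖ ∧ ‖x‖ < b}, Qd u x
      = ∫ p in Ioo a b ×ˢ Ioo (-π) π,
          p.1 * Qd u (pt2 (p.1 * Real.cos p.2) (p.1 * Real.sin p.2)) := by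
  set Φ : ℝ × ℝ → EuclideanSpace ℝ (Fin 2) := fun p => pt2 p.1 p.2 with hΦ
  set g : ℝ × ℝ → ℝ := fun p => Qd u (Φ p) with hg
  set Ω : Set (EuclideanSpace ℝ (Fin 2)) := {x | a < ‖x‖ ∧ ‖x‖ < b} with hΩ
  set A : Set (ℝ × ℝ) := Φ ⁻¹' Ω with hA
  have hAmeas : MeasurableSet A :=
    ((IsOpen.preimage continuous_pt2 (by
      have : IsOpen Ω := by
        apply IsOpen.inter
        · exact isOpen_lt continuous_const continuous_norm
        · exact isOpen_lt continuous_norm continuous_const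
      exact this))).measurableSet
  have step1 : ∫ x in Ω, Qd u x = ∫ p in A, g p :=
    ((measurePreserving_pt2).setIntegral_preimage_emb measurableEmbedding_pt2 (Qd u) Ω).symm
  have step2 : ∫ p in A, g p = ∫ p in polarCoord.target, p.1 • (A.indicator g) (polarCoord.symm p) := by
    rw [integral_comp_polarCoord_symm (A.indicator g), integral_indicator hAmeas]
  set S : Set (ℝ × ℝ) := Ioo a b ×ˢ Ioo (-π) π with hS
  set F : ℝ × ℝ → ℝ := fun p => p.1 * Qd u (pt2 (p.1 * Real.cos p.2) (p.1 * Real.sin p.2)) with hF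
  have step3 : ∫ p in polarCoord.target, p.1 • (A.indicator g) (polarCoord.symm p)
      = ∫ p in S, F p := by
    have hST : S ⊆ polarCoord.target := by
      rw [polarCoord_target]
      intro p hp
      exact ⟨lt_trans ha hp.1.1, hp.2⟩
    have hcongr : ∀ p ∈ polarCoord.target,
        p.1 • (A.indicator g) (polarCoord.symm p) = S.indicator F p := by
      rintro ⟨ρ, θ⟩ hp
      rw [polarCoord_target] at hp
      obtain ⟨hρ : (0:ℝ) < ρ, hθ⟩ := hp
      have hsymm : polarCoord.symm (ρ, θ) = (ρ * Real.cos θ, ρ * Real.sin θ) := rfl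
      have hnorm : ‖Φ (polarCoord.symm (ρ, θ))‖ = ρ := by
        rw [hsymm]
        show ‖pt2 (ρ * Real.cos θ) (ρ * Real.sin θ)‖ = ρ
        rw [norm_pt2_circle, abs_of_pos hρ]
      by_cases hmem : a < ρ ∧ ρ < b
      · have h1 : polarCoord.symm (ρ, θ) ∈ A := by
          rw [hA]
          simp only [Set.mem_preimage, hΩ, Set.mem_setOf_eq, hnorm]
          exact hmem
        have h2 : (ρ, θ) ∈ S := ⟨hmem, hθ⟩
        rw [Set.indicator_of_mem h1, Set.indicator_of_mem h2]
        rfl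
      · have h1 : polarCoord.symm (ρ, θ) ∉ A := by
          rw [hA]
          simp only [Set.mem_preimage, hΩ, Set.mem_setOf_eq, hnorm]
          exact hmem
        have h2 : (ρ, θ) ∉ S := fun hc => hmem hc.1
        rw [Set.indicator_of_notMem h1, Set.indicator_of_notMem h2]
        simp
    rw [setIntegral_congr_fun (polarCoord.open_target.measurableSet) hcongr,
      setIntegral_indicator (by measurability), Set.inter_eq_self_of_subset_right hST]
  rw [step1, step2, step3]

lemma exists_good_radius (u : EuclideanSpace ℝ (Fin 2) → ℝ) (hu : ContDiff ℝ 2 u)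
    {a b M : ℝ} (ha : 0 < a) (hab : a < b)
    (hM : ∫ x in {x : EuclideanSpace ℝ (Fin 2) | a < ‖x‖ ∧ ‖x‖ < b}, Qd u x ≤ M) :
    ∃ ρ ∈ Ioo a b, 2*π*ρ * ∫ t in (0:ℝ)..1, Qd u (γ0 ρ t) ≤ M / (b - a) := by
  have hπ : (0:ℝ) < π := Real.pi_pos
  set F : ℝ × ℝ → ℝ := fun p => p.1 * Qd u (pt2 (p.1 * Real.cos p.2) (p.1 * Real.sin p.2)) with hF
  have hFcont : Continuous F := by
    apply continuous_fst.mul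
    exact (continuous_Qd u hu).comp (continuous_pt2.comp
      ((continuous_fst.mul (Real.continuous_cos.comp continuous_snd)).prodMk
      (continuous_fst.mul (Real.continuous_sin.comp continuous_snd))))
  set S : Set (ℝ × ℝ) := Ioo a b ×ˢ Ioo (-π) π with hS
  have hFint : IntegrableOn F S := by
    apply (hFcont.continuousOn.integrableOn_compact (isCompact_Icc.prod isCompact_Icc)).mono_set
    exact Set.prod_mono Set.Ioo_subset_Icc_self Set.Ioo_subset_Icc_self
  set J : ℝ → ℝ := fun ρ => ∫ θ in Ioo (-π) π, F (ρ, θ) with hJ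
  have hFint' : Integrable F ((volume.restrict (Ioo a b)).prod (volume.restrict (Ioo (-π) π))) := by
    rwa [Measure.prod_restrict, ← Measure.volume_eq_prod]
  have hJint : IntegrableOn J (Ioo a b) := by
    have := hFint'.integral_prod_left
    exact this
  have hsum : ∫ ρ in Ioo a b, J ρ = ∫ p in S, F p := by
    rw [hS, Measure.volume_eq_prod, setIntegral_prod _ (by rwa [← Measure.volume_eq_prod])]
  have hJle : ∫ ρ in Ioo a b, J ρ ≤ M := by
    rw [hsum, ← polar_change u hu ha hab]
    exact hM
  -- selection
  have hsel : ∃ ρ ∈ Ioo a b, J ρ ≤ M / (b - a) := by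
    by_contra hcon
    push_neg at hcon
    set c : ℝ := M / (b - a) with hc
    have hpos : 0 < ∫ ρ in Ioo a b, (J ρ - c) := by
      rw [setIntegral_pos_iff_support_of_nonneg_ae]
      · rw [show Function.support (fun ρ => J ρ - c) ∩ Ioo a b = Ioo a b from
          Set.inter_eq_self_of_subset_right (fun ρ hρ => by
            simp only [Function.mem_support]
            exact ne_of_gt (sub_pos.mpr (hcon ρ hρ)))]
        simp [Real.volume_Ioo, hab]
      · filter_upwards [ae_restrict_mem measurableSet_Ioo] with ρ hρ
        exact sub_nonneg.mpr (hcon ρ hρ).le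
      · exact hJint.sub (integrableOn_const (by simp [Real.volume_Ioo]))
    rw [integral_sub hJint (integrableOn_const (by simp [Real.volume_Ioo]))] at hpos
    rw [setIntegral_const, measureReal_def, Real.volume_Ioo] at hpos
    rw [ENNReal.toReal_ofReal (by linarith : (0:ℝ) ≤ b - a), smul_eq_mul] at hpos
    have hba : (b - a) * c = M := by
      rw [hc, mul_div_cancel₀ _ (by linarith : b - a ≠ 0)]
    linarith
  obtain ⟨ρ, hρmem, hρ⟩ := hsel
  refine ⟨ρ, hρmem, ?_⟩
  have hρpos : 0 < ρ := lt_trans ha hρmem.1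
  -- convert J ρ into the interval integral
  have hq : ∀ θ : ℝ, F (ρ, θ) = ρ * Qd u (pt2 (ρ * Real.cos θ) (ρ * Real.sin θ)) := fun θ => rfl
  set q : ℝ → ℝ := fun θ => Qd u (pt2 (ρ * Real.cos θ) (ρ * Real.sin θ)) with hqdef
  have hqper : Function.Periodic q (2*π) := by
    intro θ
    simp only [hqdef, Real.cos_add_two_pi, Real.sin_add_two_pi]
  have hqcont : Continuous q := by
    exact (continuous_Qd u hu).comp (continuous_pt2.comp
      (((continuous_const.mul Real.continuous_cos)).prodMk
      ((continuous_const.mul Real.continuous_sin))))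
  have hJval : J ρ = ρ * ∫ θ in Ioo (-π) π, q θ := by
    rw [hJ]
    simp only [hq]
    rw [integral_const_mul]
  have hint1 : ∫ θ in Ioo (-π) π, q θ = ∫ θ in (-π)..π, q θ := by
    rw [intervalIntegral.integral_of_le (by linarith), integral_Ioc_eq_integral_Ioo]
  have hint2 : ∫ θ in (-π)..π, q θ = ∫ θ in (0:ℝ)..2*π, q θ := by
    have := hqper.intervalIntegral_add_eq (-π) 0
    rw [show -π + 2*π = π by ring] at this
    rw [this, zero_add]
  have hint3 : ∫ t in (0:ℝ)..1, Qd u (γ0 ρ t) = (2*π)⁻¹ * ∫ θ in (0:ℝ)..2*π, q θ := by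
    have h := intervalIntegral.integral_comp_mul_left (a := 0) (b := 1) q
      (by positivity : (2*π) ≠ 0)
    rw [mul_zero, mul_one] at h
    have hγq : ∀ t : ℝ, Qd u (γ0 ρ t) = q (2*π*t) := fun t => rfl
    simp only [hγq]
    rw [h, smul_eq_mul]
  calc 2*π*ρ * ∫ t in (0:ℝ)..1, Qd u (γ0 ρ t)
      = 2*π*ρ * ((2*π)⁻¹ * ∫ θ in (0:ℝ)..2*π, q θ) := by rw [hint3]
    _ = ρ * ∫ θ in Ioo (-π) π, q θ := by
        rw [hint1, hint2]; field_simp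
    _ = J ρ := hJval.symm
    _ ≤ M / (b - a) := hρ

end S7e

noncomputable section S7f
open Set

lemma sq_integral_le (h : ℝ → ℝ) (hc : Continuous h) :
    (∫ t in (0:ℝ)..1, h t)^2 ≤ ∫ t in (0:ℝ)..1, (h t)^2 := by
  set μ : Measure ℝ := volume.restrict (Set.Ioc (0:ℝ) 1) with hμ
  have : IsProbabilityMeasure μ := by
    constructor
    rw [hμ, Measure.restrict_apply_univ, Real.volume_Ioc]
    norm_num
  obtain ⟨C, hC⟩ := (isCompact_Icc (a := (0:ℝ)) (b := 1)).exists_bound_of_continuousOn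
    hc.continuousOn
  have hmem : MeasureTheory.MemLp h 2 μ := by
    apply MeasureTheory.MemLp.of_bound hc.aestronglyMeasurable C
    filter_upwards [ae_restrict_mem measurableSet_Ioc] with x hx
    exact hC x (Set.Ioc_subset_Icc_self hx)
  have hvar := ProbabilityTheory.variance_nonneg h μ
  rw [ProbabilityTheory.variance_eq_sub hmem] at hvar
  have h1 : ∫ t in (0:ℝ)..1, h t = ∫ x, h x ∂μ := by
    rw [intervalIntegral.integral_of_le (by norm_num : (0:ℝ) ≤ 1), hμ]
  have h2 : ∫ t in (0:ℝ)..1, (h t)^2 = ∫ x, (h x)^2 ∂μ := by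
    rw [intervalIntegral.integral_of_le (by norm_num : (0:ℝ) ≤ 1), hμ]
  rw [h1, h2]
  have : ∫ x, (h x)^2 ∂μ = ∫ x, (h^2) x ∂μ := by
    congr 1
  linarith [hvar, this]

variable (ρ : ℝ) {u : EuclideanSpace ℝ (Fin 2) → ℝ}

lemma continuous_γ0 : Continuous (γ0 ρ) := by
  show Continuous fun t : ℝ => pt2 (ρ * Real.cos (2*π*t)) (ρ * Real.sin (2*π*t))
  exact continuous_pt2.comp <| ((continuous_const.mul ((Real.continuous_cos.comp (continuous_const.mul continuous_id))))).prodMk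
    ((continuous_const.mul ((Real.continuous_sin.comp (continuous_const.mul continuous_id)))))

lemma continuous_γ1 : Continuous (γ1 ρ) := by
  show Continuous fun t : ℝ => pt2 (-(2*π*ρ * Real.sin (2*π*t))) (2*π*ρ * Real.cos (2*π*t))
  exact continuous_pt2.comp <| (((continuous_const.mul ((Real.continuous_sin.comp (continuous_const.mul continuous_id))))).neg).prodMk
    ((continuous_const.mul ((Real.continuous_cos.comp (continuous_const.mul continuous_id)))))

lemma continuous_γ2 : Continuous (γ2 ρ) := by
  show Continuous fun t : ℝ =>
    pt2 (-((2*π)^2*ρ * Real.cos (2*π*t))) (-((2*π)^2*ρ * Real.sin (2*π*t)))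
  exact continuous_pt2.comp <| (((continuous_const.mul ((Real.continuous_cos.comp (continuous_const.mul continuous_id))))).neg).prodMk
    (((continuous_const.mul ((Real.continuous_sin.comp (continuous_const.mul continuous_id))))).neg)

lemma continuous_z1 (hu : ContDiff ℝ 2 u) : Continuous (z1 ρ u) := by
  apply Continuous.clm_apply _ (continuous_γ1 ρ)
  exact ((hu.fderiv_right (m := 1) (by norm_num)).continuous).comp (continuous_γ0 ρ)

lemma continuous_z2 (hu : ContDiff ℝ 2 u) : Continuous (z2 ρ u) := by
  apply Continuous.add
  · apply Continuous.clm_apply _ (continuous_γ1 ρ)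
    apply Continuous.clm_apply _ (continuous_γ1 ρ)
    exact (((hu.fderiv_right (m := 1) (by norm_num)).continuous_fderiv (by norm_num))).comp (continuous_γ0 ρ)
  · apply Continuous.clm_apply _ (continuous_γ2 ρ)
    exact ((hu.fderiv_right (m := 1) (by norm_num)).continuous).comp (continuous_γ0 ρ)

lemma continuous_pt3_comp {f g h : ℝ → ℝ} (hf : Continuous f) (hg : Continuous g)
    (hh : Continuous h) : Continuous (fun t => pt3 (f t) (g t) (h t)) := by
  apply (PiLp.continuousLinearEquiv 2 ℝ (fun _ : Fin 3 => ℝ)).symm.continuous.comp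
  apply continuous_pi
  intro i
  fin_cases i
  · simpa using hf
  · simpa using hg
  · simpa using hh

end S7f

noncomputable section S7g
open Set intervalIntegral

lemma denom_ge (ρ : ℝ) {u : EuclideanSpace ℝ (Fin 2) → ℝ} (hρ : 0 < ρ) (t : ℝ) :
    2*π*ρ ≤ ‖pt3 (-(2*π*ρ * Real.sin (2*π*t))) (2*π*ρ * Real.cos (2*π*t)) (z1 ρ u t)‖ := by
  have hπ : (0:ℝ) < π := Real.pi_pos
  have htrig : Real.sin (2*π*t)^2 + Real.cos (2*π*t)^2 = 1 := Real.sin_sq_add_cos_sq _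
  rw [pt3_norm]
  have h : (2*π*ρ)^2 ≤ (-(2*π*ρ * Real.sin (2*π*t)))^2 + (2*π*ρ * Real.cos (2*π*t))^2
      + (z1 ρ u t)^2 := by nlinarith [sq_nonneg (z1 ρ u t)]
  calc 2*π*ρ = Real.sqrt ((2*π*ρ)^2) := (Real.sqrt_sq (by positivity)).symm
  _ ≤ _ := Real.sqrt_le_sqrt h

theorem stmt7' (a b r ε : ℝ) (ha : 0 < a) (hab : a < b) (hr0 : 0 ≤ r) (hr1 : r ≤ 1)
    (hε : 0 ≤ ε) (u : EuclideanSpace ℝ (Fin 2) → ℝ) (hu : ContDiff ℝ 2 u)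
    (hgrad : ∀ x ∈ closure {x : EuclideanSpace ℝ (Fin 2) | a < ‖x‖ ∧ ‖x‖ < b},
      ‖gradient u x‖ ≤ r)
    (hhess : ∫ x in {x : EuclideanSpace ℝ (Fin 2) | a < ‖x‖ ∧ ‖x‖ < b},
        ∑ i, ∑ j, (secondPartial u i j x) ^ 2 ≤ 2 * (1 + r) * ε) :
    ∃ ρ ∈ Set.Ioo a b, ∀ f : ℝ → EuclideanSpace ℝ (Fin 3),
      (∀ t, f t = (WithLp.equiv 2 (Fin 3 → ℝ)).symm
          ![ρ * Real.cos (2 * π * t), ρ * Real.sin (2 * π * t),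
            u ((WithLp.equiv 2 (Fin 2 → ℝ)).symm
              ![ρ * Real.cos (2 * π * t), ρ * Real.sin (2 * π * t)])]) →
      ∫ t in (0 : ℝ)..1, ‖deriv (deriv f) t‖ / ‖deriv f t‖ ≤
        2 * π * (1 + Real.sqrt 2 * r + Real.sqrt (2 * ε * b / (b - a))) := by
  have hπ : (0:ℝ) < π := Real.pi_pos
  have hhess' : ∫ x in {x : EuclideanSpace ℝ (Fin 2) | a < ‖x‖ ∧ ‖x‖ < b}, Qd u x
      ≤ 2 * (1 + r) * ε := hhess
  obtain ⟨ρ, hρmem, hρ⟩ := exists_good_radius u hu ha hab hhess'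
  refine ⟨ρ, hρmem, ?_⟩
  intro f hf
  have hρpos : 0 < ρ := lt_trans ha hρmem.1
  have hfeq : f = fun t => pt3 (ρ * Real.cos (2*π*t)) (ρ * Real.sin (2*π*t)) (u (γ0 ρ t)) := by
    funext t
    rw [hf t]
    rfl
  rw [hfeq]
  have hdf : deriv (fun t => pt3 (ρ * Real.cos (2*π*t)) (ρ * Real.sin (2*π*t)) (u (γ0 ρ t)))
      = fun t => pt3 (-(2*π*ρ * Real.sin (2*π*t))) (2*π*ρ * Real.cos (2*π*t)) (z1 ρ u t) :=
    funext fun t => (hasDerivAt_curve ρ hu t).deriv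
  rw [hdf]
  have hddf : deriv (fun t => pt3 (-(2*π*ρ * Real.sin (2*π*t))) (2*π*ρ * Real.cos (2*π*t))
        (z1 ρ u t))
      = fun t => pt3 (-((2*π)^2*ρ * Real.cos (2*π*t))) (-((2*π)^2*ρ * Real.sin (2*π*t)))
        (z2 ρ u t) :=
    funext fun t => (hasDerivAt_curve' ρ hu t).deriv
  rw [hddf]
  -- gradient bound along the circle
  have hgrad' : ∀ t : ℝ, ‖fderiv ℝ u (γ0 ρ t)‖ ≤ r := by
    intro t
    have hnorm : ‖γ0 ρ t‖ = ρ := by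
      show ‖pt2 (ρ * Real.cos (2*π*t)) (ρ * Real.sin (2*π*t))‖ = ρ
      rw [norm_pt2_circle, abs_of_pos hρpos]
    have hmem : γ0 ρ t ∈ {x : EuclideanSpace ℝ (Fin 2) | a < ‖x‖ ∧ ‖x‖ < b} := by
      rw [Set.mem_setOf_eq, hnorm]
      exact ⟨hρmem.1, hρmem.2⟩
    have := hgrad _ (subset_closure hmem)
    rwa [norm_gradient_eq] at this
  -- continuity facts
  have hnumc : Continuous fun t => ‖pt3 (-((2*π)^2*ρ * Real.cos (2*π*t)))
      (-((2*π)^2*ρ * Real.sin (2*π*t))) (z2 ρ u t)‖ :=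
    (continuous_pt3_comp (by fun_prop) (by fun_prop) (continuous_z2 ρ hu)).norm
  have hdenc : Continuous fun t => ‖pt3 (-(2*π*ρ * Real.sin (2*π*t)))
      (2*π*ρ * Real.cos (2*π*t)) (z1 ρ u t)‖ :=
    (continuous_pt3_comp (by fun_prop) (by fun_prop) (continuous_z1 ρ hu)).norm
  have hratc : Continuous fun t => ‖pt3 (-((2*π)^2*ρ * Real.cos (2*π*t)))
      (-((2*π)^2*ρ * Real.sin (2*π*t))) (z2 ρ u t)‖ / ‖pt3 (-(2*π*ρ * Real.sin (2*π*t)))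
      (2*π*ρ * Real.cos (2*π*t)) (z1 ρ u t)‖ :=
    hnumc.div hdenc fun t => ne_of_gt (lt_of_lt_of_le (by positivity) (denom_ge ρ hρpos t))
  have hsqc : Continuous fun t => Real.sqrt (Qd u (γ0 ρ t)) :=
    ((continuous_Qd u hu).comp (continuous_γ0 ρ)).sqrt
  have hGc : Continuous fun t => 2*π*(1+r) + 2*π*ρ * Real.sqrt (Qd u (γ0 ρ t)) :=
    continuous_const.add (continuous_const.mul hsqc)
  -- pointwise bound and integral mono
  have h1 : ∫ t in (0:ℝ)..1, ‖pt3 (-((2*π)^2*ρ * Real.cos (2*π*t)))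
      (-((2*π)^2*ρ * Real.sin (2*π*t))) (z2 ρ u t)‖ / ‖pt3 (-(2*π*ρ * Real.sin (2*π*t)))
      (2*π*ρ * Real.cos (2*π*t)) (z1 ρ u t)‖
      ≤ ∫ t in (0:ℝ)..1, (2*π*(1+r) + 2*π*ρ * Real.sqrt (Qd u (γ0 ρ t))) := by
    apply intervalIntegral.integral_mono_on (by norm_num)
      (hratc.intervalIntegrable 0 1) (hGc.intervalIntegrable 0 1)
    intro t _
    exact ratio_bound ρ hu hρpos hr0 t (hgrad' t)
  have h2 : ∫ t in (0:ℝ)..1, (2*π*(1+r) + 2*π*ρ * Real.sqrt (Qd u (γ0 ρ t)))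
      = 2*π*(1+r) + 2*π*ρ * ∫ t in (0:ℝ)..1, Real.sqrt (Qd u (γ0 ρ t)) := by
    rw [intervalIntegral.integral_add (f := fun _ => 2*π*(1+r))
      (g := fun t => 2*π*ρ * Real.sqrt (Qd u (γ0 ρ t))) (intervalIntegrable_const)
      ((continuous_const.mul hsqc).intervalIntegrable 0 1),
      intervalIntegral.integral_const, intervalIntegral.integral_const_mul]
    simp
  -- Cauchy-Schwarz
  have h3 : ∫ t in (0:ℝ)..1, Real.sqrt (Qd u (γ0 ρ t))
      ≤ Real.sqrt (∫ t in (0:ℝ)..1, Qd u (γ0 ρ t)) := by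
    have hs := sq_integral_le (fun t => Real.sqrt (Qd u (γ0 ρ t))) hsqc
    have heq : ∀ t : ℝ, (Real.sqrt (Qd u (γ0 ρ t)))^2 = Qd u (γ0 ρ t) := fun t =>
      Real.sq_sqrt (Qd_nonneg u _)
    simp only [heq] at hs
    have hnn : 0 ≤ ∫ t in (0:ℝ)..1, Real.sqrt (Qd u (γ0 ρ t)) :=
      intervalIntegral.integral_nonneg (by norm_num) fun t _ => Real.sqrt_nonneg _
    calc ∫ t in (0:ℝ)..1, Real.sqrt (Qd u (γ0 ρ t))
        = Real.sqrt ((∫ t in (0:ℝ)..1, Real.sqrt (Qd u (γ0 ρ t)))^2) :=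
          (Real.sqrt_sq hnn).symm
      _ ≤ _ := Real.sqrt_le_sqrt hs
  have h4 : ∫ t in (0:ℝ)..1, Qd u (γ0 ρ t) ≤ 2*(1+r)*ε / ((b-a) * (2*π*ρ)) := by
    rw [le_div_iff₀ (mul_pos (by linarith : (0:ℝ) < b - a) (by positivity : (0:ℝ) < 2*π*ρ))]
    calc (∫ t in (0:ℝ)..1, Qd u (γ0 ρ t)) * ((b-a) * (2*π*ρ))
        = (2*π*ρ * ∫ t in (0:ℝ)..1, Qd u (γ0 ρ t)) * (b-a) := by ring
      _ ≤ (2*(1+r)*ε / (b-a)) * (b-a) := by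
          apply mul_le_mul_of_nonneg_right hρ (by linarith)
      _ = 2*(1+r)*ε := div_mul_cancel₀ _ (by linarith)
  -- final arithmetic
  have hkey : 2*π*ρ * Real.sqrt (∫ t in (0:ℝ)..1, Qd u (γ0 ρ t))
      ≤ 2*π*Real.sqrt (2*ε*b/(b-a)) := by
    have hQnn : 0 ≤ ∫ t in (0:ℝ)..1, Qd u (γ0 ρ t) :=
      intervalIntegral.integral_nonneg (by norm_num) fun t _ => Qd_nonneg u _
    calc 2*π*ρ * Real.sqrt (∫ t in (0:ℝ)..1, Qd u (γ0 ρ t))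
        = Real.sqrt ((2*π*ρ)^2 * ∫ t in (0:ℝ)..1, Qd u (γ0 ρ t)) := by
          rw [Real.sqrt_mul (by positivity), Real.sqrt_sq (by positivity)]
      _ ≤ Real.sqrt ((2*π)^2 * (2*ε*b/(b-a))) := by
          apply Real.sqrt_le_sqrt
          calc (2*π*ρ)^2 * ∫ t in (0:ℝ)..1, Qd u (γ0 ρ t)
              ≤ (2*π*ρ)^2 * (2*(1+r)*ε / ((b-a) * (2*π*ρ))) := by
                apply mul_le_mul_of_nonneg_left h4 (by positivity)
            _ = (2*π*ρ*(2*(1+r)*ε)) / (b-a) := by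
                have hne1 : b - a ≠ 0 := by linarith
                have hne2 : 2*π*ρ ≠ 0 := by positivity
                field_simp
            _ ≤ ((2*π)^2 * (2*ε*b)) / (b-a) := by
                apply (div_le_div_iff_of_pos_right (by linarith : (0:ℝ) < b - a)).mpr
                have hb0 : (0:ℝ) < b := lt_trans (lt_trans ha hρmem.1) hρmem.2
                have h6 : ρ*(1+r) ≤ 2*b := by nlinarith [hρmem.2]
                calc 2*π*ρ*(2*(1+r)*ε) = 4*π*ε*(ρ*(1+r)) := by ring
                  _ ≤ 4*π*ε*(2*b) := mul_le_mul_of_nonneg_left h6 (by positivity)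
                  _ ≤ (2*π)^2 * (2*ε*b) := by
                      nlinarith [mul_nonneg (mul_nonneg hπ.le (mul_nonneg hε hb0.le))
                        (by nlinarith [Real.pi_gt_three] : (0:ℝ) ≤ π - 1)]
            _ = (2*π)^2 * (2*ε*b/(b-a)) := by ring
      _ = 2*π*Real.sqrt (2*ε*b/(b-a)) := by
          rw [Real.sqrt_mul (by positivity), Real.sqrt_sq (by positivity)]
  calc _ ≤ 2*π*(1+r) + 2*π*ρ * ∫ t in (0:ℝ)..1, Real.sqrt (Qd u (γ0 ρ t)) := by
        rw [← h2]; exact h1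
    _ ≤ 2*π*(1+r) + 2*π*ρ * Real.sqrt (∫ t in (0:ℝ)..1, Qd u (γ0 ρ t)) := by
        have := mul_le_mul_of_nonneg_left h3 (by positivity : (0:ℝ) ≤ 2*π*ρ)
        linarith
    _ ≤ 2*π*(1 + Real.sqrt 2 * r) + 2*π*Real.sqrt (2*ε*b/(b-a)) := by
        have h5 : r ≤ Real.sqrt 2 * r := by
          nlinarith [Real.sqrt_nonneg 2, Real.sq_sqrt (by norm_num : (0:ℝ) ≤ 2),
            Real.sqrt_le_sqrt (by norm_num : (1:ℝ) ≤ 2), Real.sqrt_one]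
        nlinarith [hkey]
    _ = 2 * π * (1 + Real.sqrt 2 * r + Real.sqrt (2 * ε * b / (b - a))) := by ring

end S7g

end S7

/-- Lemma 5.1 (PDElemma): if `‖∇u‖ ≤ r ≤ 1` on the closed annulus `a ≤ ‖x‖ ≤ b`
and `∫_Ω ‖D²u‖² ≤ 2(1+r)ε`, then there is a radius `ρ ∈ (a,b)` on whose circle the
lifted curve `f(t) = (ρcos 2πt, ρsin 2πt, u(ρcos 2πt, ρsin 2πt))` satisfies
`∫₀¹ ‖f″‖/‖f′‖ dt ≤ 2π(1 + √2 r + √(2εb/(b−a)))`. -/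
theorem stmt7 (a b r ε : ℝ) (ha : 0 < a) (hab : a < b) (hr0 : 0 ≤ r) (hr1 : r ≤ 1)
    (hε : 0 ≤ ε) (u : EuclideanSpace ℝ (Fin 2) → ℝ) (hu : ContDiff ℝ 2 u)
    (hgrad : ∀ x ∈ closure {x : EuclideanSpace ℝ (Fin 2) | a < ‖x‖ ∧ ‖x‖ < b},
      ‖gradient u x‖ ≤ r)
    (hhess : ∫ x in {x : EuclideanSpace ℝ (Fin 2) | a < ‖x‖ ∧ ‖x‖ < b},
        ∑ i, ∑ j, (secondPartial u i j x) ^ 2 ≤ 2 * (1 + r) * ε) :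
    ∃ ρ ∈ Set.Ioo a b, ∀ f : ℝ → EuclideanSpace ℝ (Fin 3),
      (∀ t, f t = (WithLp.equiv 2 (Fin 3 → ℝ)).symm
          ![ρ * Real.cos (2 * π * t), ρ * Real.sin (2 * π * t),
            u ((WithLp.equiv 2 (Fin 2 → ℝ)).symm
              ![ρ * Real.cos (2 * π * t), ρ * Real.sin (2 * π * t)])]) →
      ∫ t in (0 : ℝ)..1, ‖deriv (deriv f) t‖ / ‖deriv f t‖ ≤
        2 * π * (1 + Real.sqrt 2 * r + Real.sqrt (2 * ε * b / (b - a))) := by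
  exact stmt7' a b r ε ha hab hr0 hr1 hε u hu hgrad hhess
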